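/- Let ε > 0, K a positive integer, y ∈ [K], and let v_1, …, v_K be vectors in a real inner product space. Let S be drawn from the subset randomizer P_y and ĝ = (2(e^ε + 1)/(e^ε − 1)) · Σ_{k ∈ [K]} (1{k ∈ S} − 1/(e^ε + 1)) · v_k. Then E[‖ĝ − v_y‖²] = (2(e^ε + 1)/(e^ε − 1))² · ( Σ_{k ≠ y} ‖v_k‖² · e^ε/(e^ε + 1)² + (1/4)‖v_y‖² ). -/

import Mathlib

open Finset

/-- The subset randomizer: each `i ∈ [K]` is included in the output set independently with
probability `1/2` if `i = y` and probability `1/(e^ε + 1)` otherwise. `subsetProb ε y S` is the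
probability that the output is exactly `S`. -/
noncomputable def subsetProb (ε : ℝ) {K : ℕ} (y : Fin K) (S : Finset (Fin K)) : ℝ :=
  (∏ i ∈ S, if i = y then (1 : ℝ) / 2 else 1 / (Real.exp ε + 1)) *
    ∏ i ∈ Sᶜ, (1 - if i = y then (1 : ℝ) / 2 else 1 / (Real.exp ε + 1))

lemma sum_prod_compl {K : ℕ} (a b : Fin K → ℝ) :
    ∑ S : Finset (Fin K), (∏ i ∈ S, a i) * ∏ i ∈ Sᶜ, b i = ∏ i, (a i + b i) := by
  rw [Finset.prod_add, ← Finset.powerset_univ]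
  refine Finset.sum_congr rfl fun t _ => ?_
  rw [Finset.compl_eq_univ_sdiff]

lemma moment {K : ℕ} (p : Fin K → ℝ) (k l : Fin K) :
    ∑ S : Finset (Fin K), ((∏ i ∈ S, p i) * ∏ i ∈ Sᶜ, (1 - p i)) *
      ((if k ∈ S then 1 - p k else -p k) * (if l ∈ S then 1 - p l else -p l))
    = if k = l then p k * (1 - p k) else 0 := by
  have key : ∀ S : Finset (Fin K),
      ((∏ i ∈ S, p i) * ∏ i ∈ Sᶜ, (1 - p i)) *
        ((if k ∈ S then 1 - p k else -p k) * (if l ∈ S then 1 - p l else -p l))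
      = (∏ i ∈ S, p i * (if i = k then 1 - p k else 1) * (if i = l then 1 - p l else 1)) *
        ∏ i ∈ Sᶜ, (1 - p i) * (if i = k then -p k else 1) * (if i = l then -p l else 1) := by
    intro S
    rw [Finset.prod_mul_distrib, Finset.prod_mul_distrib,
        Finset.prod_mul_distrib, Finset.prod_mul_distrib]
    rw [Finset.prod_ite_eq' S k (fun _ => 1 - p k), Finset.prod_ite_eq' S l (fun _ => 1 - p l),
        Finset.prod_ite_eq' Sᶜ k (fun _ => -p k), Finset.prod_ite_eq' Sᶜ l (fun _ => -p l)]
    simp only [Finset.mem_compl]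
    by_cases hk : k ∈ S <;> by_cases hl : l ∈ S <;> simp [hk, hl] <;> try ring
  rw [Finset.sum_congr rfl fun S _ => key S, sum_prod_compl]
  by_cases hkl : k = l
  · subst hkl
    simp only [if_pos rfl]
    rw [Fintype.prod_eq_single k]
    · simp; try ring
    · intro i hi
      simp [hi]; try ring
  · rw [if_neg hkl]
    apply Finset.prod_eq_zero (Finset.mem_univ k)
    simp [hkl]; try ring

theorem stmt_2 {V : Type*} [NormedAddCommGroup V] [InnerProductSpace ℝ V]
    (ε : ℝ) (hε : 0 < ε) (K : ℕ) (hK : 0 < K) (y : Fin K) (v : Fin K → V) :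
    (∑ S : Finset (Fin K), subsetProb ε y S *
        ‖((2 * (Real.exp ε + 1) / (Real.exp ε - 1)) •
            ∑ k : Fin K, ((if k ∈ S then (1 : ℝ) else 0) - 1 / (Real.exp ε + 1)) • v k)
          - v y‖ ^ 2)
      = (2 * (Real.exp ε + 1) / (Real.exp ε - 1)) ^ 2 *
          ((∑ k ∈ Finset.univ.erase y,
              ‖v k‖ ^ 2 * (Real.exp ε / (Real.exp ε + 1) ^ 2)) +
            (1 / 4) * ‖v y‖ ^ 2) := by
  set e := Real.exp ε with he
  have he1 : 1 < e := by
    rw [he, ← Real.exp_zero]; exact Real.exp_lt_exp.mpr hε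
  have hne1 : e + 1 ≠ 0 := by linarith
  have hne2 : e - 1 ≠ 0 := by linarith
  set c : ℝ := 2 * (e + 1) / (e - 1) with hc
  set q : ℝ := 1 / (e + 1) with hq
  set p : Fin K → ℝ := fun k => if k = y then 1 / 2 else q with hp
  have hP : ∀ S : Finset (Fin K),
      subsetProb ε y S = (∏ i ∈ S, p i) * ∏ i ∈ Sᶜ, (1 - p i) := fun S => rfl
  have hcq : c * (1 / 2 - q) = 1 := by
    rw [hc, hq]; field_simp; ring
  have hvec : ∀ S : Finset (Fin K),
      (c • ∑ k : Fin K, ((if k ∈ S then (1 : ℝ) else 0) - q) • v k) - v y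
      = c • ∑ k : Fin K, ((if k ∈ S then (1 : ℝ) else 0) - p k) • v k := by
    intro S
    have hterm : ∀ k : Fin K, ((if k ∈ S then (1 : ℝ) else 0) - q) • v k
        = ((if k ∈ S then (1 : ℝ) else 0) - p k) • v k
          + (if k = y then (1 / 2 - q) • v y else 0) := by
      intro k
      by_cases hk : k = y
      · subst hk; simp only [hp, if_pos rfl, if_true]
        rw [← add_smul]; congr 1; ring
      · simp [hp, hk]
    have hsplit : ∑ k : Fin K, ((if k ∈ S then (1 : ℝ) else 0) - q) • v k
        = (∑ k : Fin K, ((if k ∈ S then (1 : ℝ) else 0) - p k) • v k)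
          + (1 / 2 - q) • v y := by
      rw [Finset.sum_congr rfl fun k _ => hterm k, Finset.sum_add_distrib]
      congr 1
      rw [Finset.sum_ite_eq' Finset.univ y (fun _ => (1 / 2 - q) • v y)]
      simp
    rw [hsplit, smul_add, smul_smul, hcq, one_smul, add_sub_cancel_right]
  have hnorm : ∀ x : Fin K → ℝ,
      ‖∑ k : Fin K, x k • v k‖ ^ 2
      = ∑ k : Fin K, ∑ l : Fin K, (x k * x l) * (inner ℝ (v k) (v l) : ℝ) := by
    intro x
    rw [← real_inner_self_eq_norm_sq, sum_inner]
    refine Finset.sum_congr rfl fun k _ => ?_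
    rw [inner_sum]
    refine Finset.sum_congr rfl fun l _ => ?_
    rw [real_inner_smul_left, real_inner_smul_right]; ring
  have step : ∀ S : Finset (Fin K),
      subsetProb ε y S *
        ‖(c • ∑ k : Fin K, ((if k ∈ S then (1 : ℝ) else 0) - q) • v k) - v y‖ ^ 2
      = ∑ k : Fin K, ∑ l : Fin K, (inner ℝ (v k) (v l) : ℝ) *
          (c ^ 2 * (((∏ i ∈ S, p i) * ∏ i ∈ Sᶜ, (1 - p i)) *
            ((if k ∈ S then 1 - p k else -p k) * (if l ∈ S then 1 - p l else -p l)))) := by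
    intro S
    have hx : ∀ k : Fin K, ((if k ∈ S then (1 : ℝ) else 0) - p k)
        = (if k ∈ S then 1 - p k else -p k) := by
      intro k; by_cases h : k ∈ S <;> simp [h]
    rw [hvec S, norm_smul, mul_pow, Real.norm_eq_abs, sq_abs, hnorm, hP S,
        Finset.mul_sum, Finset.mul_sum]
    refine Finset.sum_congr rfl fun k _ => ?_
    rw [Finset.mul_sum, Finset.mul_sum]
    refine Finset.sum_congr rfl fun l _ => ?_
    rw [hx k, hx l]; ring
  rw [Finset.sum_congr rfl fun S _ => step S, Finset.sum_comm]
  rw [Finset.sum_congr rfl fun k (_ : k ∈ Finset.univ) => Finset.sum_comm]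
  have hmom : ∀ k : Fin K,
      (∑ l : Fin K, ∑ S : Finset (Fin K), (inner ℝ (v k) (v l) : ℝ) *
          (c ^ 2 * (((∏ i ∈ S, p i) * ∏ i ∈ Sᶜ, (1 - p i)) *
            ((if k ∈ S then 1 - p k else -p k) * (if l ∈ S then 1 - p l else -p l)))))
      = ‖v k‖ ^ 2 * (c ^ 2 * (p k * (1 - p k))) := by
    intro k
    have hl : ∀ l : Fin K,
        (∑ S : Finset (Fin K), (inner ℝ (v k) (v l) : ℝ) *
          (c ^ 2 * (((∏ i ∈ S, p i) * ∏ i ∈ Sᶜ, (1 - p i)) *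
            ((if k ∈ S then 1 - p k else -p k) * (if l ∈ S then 1 - p l else -p l)))))
        = (inner ℝ (v k) (v l) : ℝ) * (c ^ 2 * (if k = l then p k * (1 - p k) else 0)) := by
      intro l
      rw [← Finset.mul_sum, ← Finset.mul_sum, moment p k l]
    rw [Finset.sum_congr rfl fun l _ => hl l]
    have : ∀ l : Fin K, (inner ℝ (v k) (v l) : ℝ) *
        (c ^ 2 * (if k = l then p k * (1 - p k) else 0))
        = if k = l then (inner ℝ (v k) (v l) : ℝ) * (c ^ 2 * (p k * (1 - p k))) else 0 := by
      intro l; by_cases h : k = l <;> simp [h]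
    rw [Finset.sum_congr rfl fun l _ => this l, Finset.sum_ite_eq Finset.univ k]
    simp [real_inner_self_eq_norm_sq]
  rw [Finset.sum_congr rfl fun k _ => hmom k]
  rw [← Finset.sum_erase_add Finset.univ _ (Finset.mem_univ y)]
  have hpy : p y = 1 / 2 := by simp [hp]
  have hpk : ∀ k : Fin K, k ≠ y → c ^ 2 * (p k * (1 - p k)) = c ^ 2 * (e / (e + 1) ^ 2) := by
    intro k hk
    have h1 : p k = 1 / (e + 1) := by simp [hp, hk, hq]
    have h2 : (1 / (e + 1)) * (1 - 1 / (e + 1)) = e / (e + 1) ^ 2 := by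
      rw [one_sub_div hne1, add_sub_cancel_right, div_mul_div_comm, one_mul, ← sq]
    rw [h1, h2]
  rw [mul_add, Finset.mul_sum]
  congr 1
  · refine Finset.sum_congr rfl fun k hk => ?_
    rw [hpk k (Finset.ne_of_mem_erase hk)]; ring
  · rw [hpy]; ring
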